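/- Let k, ℓ ≥ 2 be multiplicatively independent integers, let b₁ < b₂ be positive reals and let a < b₁. Then for every t₀ ∈ ℕ there exist s, t ∈ ℕ with t > t₀ and b₁ < k^s/ℓ^t < b₂; in particular the exponents t realizing membership of k^s/ℓ^t in a fixed open interval can be taken arbitrarily large. -/

import Mathlib

open Real AddSubgroup

/-- If a sequence `y₀ + j*γ` steps by a nonzero `γ` of absolute value `< ε`,
then some term is within `ε` of an integer. -/
lemma aux_exists_near_int (y₀ γ ε : ℝ) (hγ0 : γ ≠ 0) (hγ : |γ| < ε) :
    ∃ j : ℕ, ∃ t : ℤ, |y₀ + j * γ - t| < ε := by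
  rcases hγ0.lt_or_gt with hneg | hpos
  · -- descending; target M = ⌈y₀⌉ - 1 < y₀
    have hMy : ((⌈y₀⌉ - 1 : ℤ) : ℝ) < y₀ := by
      push_cast
      have := Int.ceil_lt_add_one y₀
      linarith
    set M : ℤ := ⌈y₀⌉ - 1 with hM
    have hex : ∃ j : ℕ, y₀ + j * γ ≤ M := by
      obtain ⟨j, hj⟩ := exists_nat_ge ((y₀ - M) / (-γ))
      refine ⟨j, ?_⟩
      rw [div_le_iff₀ (by linarith)] at hj
      nlinarith
    classical
    set j := Nat.find hex with hj
    have hjle : y₀ + j * γ ≤ M := Nat.find_spec hex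
    have hj0 : j ≠ 0 := by
      intro h
      rw [h] at hjle
      push_cast at hjle
      linarith
    have hprev : ¬ (y₀ + (j - 1 : ℕ) * γ ≤ M) := Nat.find_min hex (by omega)
    push_neg at hprev
    have hcast : ((j - 1 : ℕ) : ℝ) = (j : ℝ) - 1 := by
      have : 1 ≤ j := Nat.one_le_iff_ne_zero.mpr hj0
      push_cast [Nat.cast_sub this]; ring
    rw [hcast] at hprev
    refine ⟨j, M, ?_⟩
    rw [abs_lt]
    have habs : -γ < ε := by rwa [abs_of_neg hneg] at hγ
    constructor <;> nlinarith
  · -- ascending; target M = ⌊y₀⌋ + 1 > y₀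
    have hMy : y₀ < ((⌊y₀⌋ + 1 : ℤ) : ℝ) := by
      push_cast
      have := Int.lt_floor_add_one y₀
      linarith
    set M : ℤ := ⌊y₀⌋ + 1 with hM
    have hex : ∃ j : ℕ, (M : ℝ) ≤ y₀ + j * γ := by
      obtain ⟨j, hj⟩ := exists_nat_ge ((M - y₀) / γ)
      refine ⟨j, ?_⟩
      rw [div_le_iff₀ hpos] at hj
      nlinarith
    classical
    set j := Nat.find hex with hj
    have hjle : (M : ℝ) ≤ y₀ + j * γ := Nat.find_spec hex
    have hj0 : j ≠ 0 := by
      intro h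
      rw [h] at hjle
      push_cast at hjle
      linarith
    have hprev : ¬ ((M : ℝ) ≤ y₀ + (j - 1 : ℕ) * γ) := Nat.find_min hex (by omega)
    push_neg at hprev
    have hcast : ((j - 1 : ℕ) : ℝ) = (j : ℝ) - 1 := by
      have : 1 ≤ j := Nat.one_le_iff_ne_zero.mpr hj0
      push_cast [Nat.cast_sub this]; ring
    rw [hcast] at hprev
    refine ⟨j, M, ?_⟩
    rw [abs_lt]
    have habs : γ < ε := by rwa [abs_of_pos hpos] at hγ
    constructor <;> nlinarith

/-- For irrational `θ` and any `x, ε > 0, s₀`, there is `s ≥ s₀` with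
`s*θ + x` within `ε` of an integer. -/
lemma aux_orbit_dense (θ : ℝ) (hθ : Irrational θ) (x ε : ℝ) (hε : 0 < ε) (s₀ : ℕ) :
    ∃ s : ℕ, s₀ ≤ s ∧ ∃ t : ℤ, |s * θ + x - t| < ε := by
  -- the subgroup generated by θ and 1 is dense
  set S : AddSubgroup ℝ := AddSubgroup.closure {θ, 1} with hS
  have hdense : Dense (S : Set ℝ) := by
    rcases S.dense_or_cyclic with h | ⟨a, ha⟩
    · exact h
    · exfalso
      have h1 : (1 : ℝ) ∈ S := AddSubgroup.subset_closure (by simp)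
      have hθS : θ ∈ S := AddSubgroup.subset_closure (by simp)
      rw [ha, AddSubgroup.mem_closure_singleton] at h1 hθS
      obtain ⟨n, hn⟩ := h1
      obtain ⟨m, hm⟩ := hθS
      have hn0 : n ≠ 0 := by rintro rfl; simp at hn
      have hne : (n : ℝ) ≠ 0 := Int.cast_ne_zero.mpr hn0
      have hkey : θ * n = m := by
        rw [← hm, zsmul_eq_mul]
        rw [zsmul_eq_mul] at hn
        rw [mul_assoc, mul_comm a, hn, mul_one]
      have : θ = (m : ℝ) / (n : ℝ) := by
        field_simp
        linarith [hkey]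
      exact hθ ⟨(m : ℚ) / n, by rw [this]; push_cast; ring⟩
  -- find a small positive element of S
  set ε' := min ε 1 with hε'
  have hε'0 : 0 < ε' := lt_min hε one_pos
  obtain ⟨g, hgS, hg0, hgε⟩ : ∃ g ∈ S, 0 < g ∧ g < ε' := by
    obtain ⟨g, hg1, hg2⟩ := hdense.exists_mem_open isOpen_Ioo
      (Set.nonempty_Ioo.mpr hε'0)
    exact ⟨g, hg1, hg2.1, hg2.2⟩
  obtain ⟨m, n, hmn⟩ := AddSubgroup.mem_closure_pair.mp hgS
  simp only [zsmul_eq_mul, mul_one] at hmn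
  have hm0 : m ≠ 0 := by
    rintro rfl
    simp only [Int.cast_zero, zero_mul, zero_add] at hmn
    have : (0 : ℝ) < n := hmn ▸ hg0
    have hn1 : (1 : ℤ) ≤ n := by exact_mod_cast this
    have : (1 : ℝ) ≤ n := by exact_mod_cast hn1
    have := hgε.trans_le (min_le_right ε 1)
    linarith [hmn ▸ this]
  have hgε2 : g < ε := hgε.trans_le (min_le_left ε 1)
  rcases hm0.lt_or_gt with hmneg | hmpos
  · -- m < 0 : use steps of -g
    obtain ⟨j, t, hjt⟩ := aux_exists_near_int ((s₀ : ℝ) * θ + x) (-g) ε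
      (by linarith) (by rw [abs_of_neg (by linarith)]; linarith)
    refine ⟨s₀ + j * (-m).toNat, Nat.le_add_right _ _, t + j * n, ?_⟩
    have hmt : ((-m).toNat : ℝ) = -(m : ℝ) := by
      have h2 : ((-m).toNat : ℤ) = -m := Int.toNat_of_nonneg (by omega)
      exact_mod_cast h2
    have key : ((s₀ + j * (-m).toNat : ℕ) : ℝ) * θ + x - ((t + (j : ℤ) * n : ℤ) : ℝ)
        = (s₀ : ℝ) * θ + x + j * (-g) - t := by
      push_cast [hmt]
      linear_combination (-(j:ℝ)) * hmn
    rw [key]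
    exact hjt
  · -- m > 0 : use steps of g
    obtain ⟨j, t, hjt⟩ := aux_exists_near_int ((s₀ : ℝ) * θ + x) g ε
      (ne_of_gt hg0) (by rw [abs_of_pos hg0]; linarith)
    refine ⟨s₀ + j * m.toNat, Nat.le_add_right _ _, t - j * n, ?_⟩
    have hmt : (m.toNat : ℝ) = (m : ℝ) := by
      have h2 : (m.toNat : ℤ) = m := Int.toNat_of_nonneg (le_of_lt hmpos)
      exact_mod_cast h2
    have key : ((s₀ + j * m.toNat : ℕ) : ℝ) * θ + x - ((t - (j : ℤ) * n : ℤ) : ℝ)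
        = (s₀ : ℝ) * θ + x + j * g - t := by
      push_cast [hmt]
      linear_combination (j:ℝ) * hmn
    rw [key]
    exact hjt

/-- For multiplicatively independent `k, ℓ ≥ 2`, positive reals `b₁ < b₂` and
`a < b₁`, for every `t₀ ∈ ℕ` there exist `s, t ∈ ℕ` with `t > t₀` and
`b₁ < k^s/ℓ^t < b₂`. -/
theorem ratio_in_interval_large_exponent (k l : ℕ) (hk : 2 ≤ k) (hl : 2 ≤ l)
    (hmi : ∀ s t : ℕ, k ^ s = l ^ t → s = 0 ∧ t = 0)
    (a b₁ b₂ : ℝ) (hb₁ : 0 < b₁) (hb : b₁ < b₂) (ha : a < b₁) :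
    ∀ t₀ : ℕ, ∃ s t : ℕ, t₀ < t ∧
      b₁ < (k : ℝ) ^ s / (l : ℝ) ^ t ∧ (k : ℝ) ^ s / (l : ℝ) ^ t < b₂ := by
  intro t₀
  have hk1 : (1 : ℝ) < k := by exact_mod_cast hk.trans_lt' one_lt_two
  have hl1 : (1 : ℝ) < l := by exact_mod_cast hl.trans_lt' one_lt_two
  have hα : 0 < Real.log k := Real.log_pos hk1
  have hβ : 0 < Real.log l := Real.log_pos hl1
  set θ := Real.log k / Real.log l with hθdef
  have hθpos : 0 < θ := div_pos hα hβ
  have hθ : Irrational θ := by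
    rintro ⟨q, hq⟩
    have hqpos : (0 : ℝ) < q := by rw [hq]; exact hθpos
    have hqpos' : 0 < q := by exact_mod_cast hqpos
    have hnum : 0 < q.num := Rat.num_pos.mpr hqpos'
    have hden : 0 < (q.den : ℝ) := by positivity
    have hkey : (q.den : ℝ) * Real.log k = (q.num : ℝ) * Real.log l := by
      have : (q : ℝ) = (q.num : ℝ) / (q.den : ℝ) := Rat.cast_def q
      rw [this] at hq
      field_simp [hθdef] at hq
      rw [hq, hθdef, mul_assoc, div_mul_cancel₀ _ (ne_of_gt hβ)]
    have hnt : ((q.num.toNat : ℕ) : ℝ) = ((q.num : ℤ) : ℝ) := by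
      exact_mod_cast Int.toNat_of_nonneg (le_of_lt hnum)
    have hlogeq : Real.log ((k : ℝ) ^ q.den) = Real.log ((l : ℝ) ^ q.num.toNat) := by
      rw [Real.log_pow, Real.log_pow, hnt]
      exact hkey
    have hpow : (k : ℝ) ^ q.den = (l : ℝ) ^ q.num.toNat := by
      have h1 : (0:ℝ) < (k : ℝ) ^ q.den := by positivity
      have h2 : (0:ℝ) < (l : ℝ) ^ q.num.toNat := by positivity
      exact Real.log_injOn_pos (Set.mem_Ioi.mpr h1) (Set.mem_Ioi.mpr h2) hlogeq
    have hpow' : k ^ q.den = l ^ q.num.toNat := by exact_mod_cast hpow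
    have := (hmi _ _ hpow').1
    exact absurd this q.den_nz
  -- set up the interval in log scale
  set c : ℝ := Real.log b₁ / Real.log l with hc
  set d : ℝ := Real.log b₂ / Real.log l with hd
  have hcd : c < d :=
    (div_lt_div_iff_of_pos_right hβ).mpr (Real.log_lt_log hb₁ hb)
  set ε : ℝ := (d - c) / 2 with hε
  have hεpos : 0 < ε := by simp [hε]; linarith
  -- choose s₀ so that t will be large
  obtain ⟨s₀, hs₀⟩ := exists_nat_ge ((t₀ + 1 + |d|) / θ)
  have hs₀' : (t₀ : ℝ) + 1 + |d| ≤ s₀ * θ := by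
    rw [div_le_iff₀ hθpos] at hs₀; linarith
  obtain ⟨s, hss₀, t, ht⟩ := aux_orbit_dense θ hθ (-(c + d) / 2) ε hεpos s₀
  rw [abs_lt] at ht
  have h1 : c < s * θ - t := by linarith [ht.1]
  have h2 : s * θ - t < d := by linarith [ht.2]
  -- t is large
  have hsθ : (s₀ : ℝ) * θ ≤ s * θ := by
    apply mul_le_mul_of_nonneg_right _ (le_of_lt hθpos)
    exact_mod_cast hss₀
  have htlarge : (t₀ : ℝ) < t := by
    have : (t : ℝ) > s * θ - d := by linarith
    have habs : d ≤ |d| := le_abs_self d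
    nlinarith
  have htnat : (t₀ : ℤ) < t := by exact_mod_cast htlarge
  have ht0 : 0 ≤ t := le_trans (by positivity) (le_of_lt htnat)
  refine ⟨s, t.toNat, ?_, ?_, ?_⟩
  · omega
  · -- b₁ < k^s / l^t
    have hlog : Real.log b₁ < s * Real.log k - t * Real.log l := by
      have h1' : c * Real.log l < (s * θ - t) * Real.log l :=
        (mul_lt_mul_of_pos_right h1 hβ)
      rw [hc] at h1'
      rw [div_mul_cancel₀ _ (ne_of_gt hβ)] at h1'
      calc Real.log b₁ < (s * θ - t) * Real.log l := h1'
        _ = s * Real.log k - t * Real.log l := by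
            field_simp [hθdef]
            linear_combination (s:ℝ) * (div_mul_cancel₀ (Real.log k) (ne_of_gt hβ))
    have hnt : ((t.toNat : ℕ) : ℝ) = (t : ℝ) := by
      exact_mod_cast Int.toNat_of_nonneg ht0
    have hrw : s * Real.log k - t * Real.log l
        = Real.log ((k : ℝ) ^ s / (l : ℝ) ^ t.toNat) := by
      rw [Real.log_div (by positivity) (by positivity), Real.log_pow, Real.log_pow, hnt]
    rw [hrw] at hlog
    exact (Real.log_lt_log_iff hb₁ (by positivity)).mp hlog
  · -- k^s / l^t < b₂
    have hlog : s * Real.log k - t * Real.log l < Real.log b₂ := by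
      have h2' : (s * θ - t) * Real.log l < d * Real.log l :=
        (mul_lt_mul_of_pos_right h2 hβ)
      rw [hd] at h2'
      rw [div_mul_cancel₀ _ (ne_of_gt hβ)] at h2'
      calc s * Real.log k - t * Real.log l
          = (s * θ - t) * Real.log l := by
            field_simp [hθdef]
            linear_combination (-(s:ℝ)) * (div_mul_cancel₀ (Real.log k) (ne_of_gt hβ))
        _ < Real.log b₂ := h2'
    have hnt : ((t.toNat : ℕ) : ℝ) = (t : ℝ) := by
      exact_mod_cast Int.toNat_of_nonneg ht0
    have hrw : s * Real.log k - t * Real.log l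
        = Real.log ((k : ℝ) ^ s / (l : ℝ) ^ t.toNat) := by
      rw [Real.log_div (by positivity) (by positivity), Real.log_pow, Real.log_pow, hnt]
    rw [hrw] at hlog
    have hb₂pos : 0 < b₂ := hb₁.trans hb
    exact (Real.log_lt_log_iff (by positivity) hb₂pos).mp hlog
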